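/- For the path graph A_n on n vertices, the Alexander polynomial satisfies Δ(A_n) = t^{−n/2} · Σ_{k=0}^{n} (−1)^{n−k} t^k. -/

import Mathlib

set_option maxHeartbeats 1000000


open scoped Classical

noncomputable section

abbrev K : Type := FractionRing (MvPolynomial Bool ℚ)

/-- The element `t^{1/2}`. -/
def S : K := algebraMap (MvPolynomial Bool ℚ) K (MvPolynomial.X false)

/-- The variable `t = (t^{1/2})²` of the Alexander polynomial. -/
def T : K := S ^ 2

/-- A rule assigning a value to every finite simple graph. -/
abbrev GraphFun : Type 1 :=
  ∀ (V : Type) [Fintype V] [DecidableEq V], SimpleGraph V → K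

/-- `v` is a leaf whose unique neighbor is `w`. -/
def IsLeaf {V : Type} (G : SimpleGraph V) (v w : V) : Prop :=
  G.neighborSet v = {w}

/-- The defining recursion of the Alexander polynomial of a forest:
value `1` on the empty graph, `t^{1/2} − t^{−1/2}` on a single vertex,
the leaf-removal recursion `Δ(Q) = (t^{1/2}−t^{−1/2})Δ(Q−v) + Δ(Q−{v,ṽ})`,
and multiplicativity over disjoint unions. -/
def AlexRules (f : GraphFun) : Prop :=
  (∀ (V : Type) [Fintype V] [DecidableEq V] (G : SimpleGraph V),
      IsEmpty V → f V G = 1) ∧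
  (∀ (V : Type) [Fintype V] [DecidableEq V] (G : SimpleGraph V),
      Fintype.card V = 1 → f V G = S - S⁻¹) ∧
  (∀ (V : Type) [Fintype V] [DecidableEq V] (G : SimpleGraph V),
      G.IsAcyclic → ∀ v w : V, IsLeaf G v w →
      f V G = (S - S⁻¹) * f ↥{x : V | x ≠ v} (G.induce {x : V | x ≠ v}) +
        f ↥{x : V | x ≠ v ∧ x ≠ w} (G.induce {x : V | x ≠ v ∧ x ≠ w})) ∧
  (∀ (V : Type) [Fintype V] [DecidableEq V] (G : SimpleGraph V),
      G.IsAcyclic → ∀ s : Set V, (∀ x ∈ s, ∀ y ∉ s, ¬ G.Adj x y) →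
      f V G = f ↥s (G.induce s) * f ↥sᶜ (G.induce sᶜ))

lemma S_ne_zero : S ≠ 0 := by
  intro h
  apply MvPolynomial.X_ne_zero (R := ℚ) false
  apply IsFractionRing.injective (MvPolynomial Bool ℚ) K
  simp only [S] at h
  simpa using h

def P (n : ℕ) : K := (S⁻¹) ^ n * ∑ k ∈ Finset.range (n + 1), (-1 : K) ^ (n - k) * T ^ k

lemma Q_succ (n : ℕ) :
    ∑ k ∈ Finset.range (n + 2), (-1 : K) ^ (n + 1 - k) * T ^ k
      = T ^ (n + 1) - ∑ k ∈ Finset.range (n + 1), (-1 : K) ^ (n - k) * T ^ k := by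
  rw [Finset.sum_range_succ]
  have h : ∀ k ∈ Finset.range (n + 1),
      (-1 : K) ^ (n + 1 - k) * T ^ k = -((-1) ^ (n - k) * T ^ k) := by
    intro k hk
    have hk' : k ≤ n := Nat.lt_succ_iff.mp (Finset.mem_range.mp hk)
    rw [show n + 1 - k = (n - k) + 1 by omega, pow_succ]
    ring
  rw [Finset.sum_congr rfl h, Nat.sub_self, pow_zero, one_mul, Finset.sum_neg_distrib]
  ring

lemma P_rec (n : ℕ) : P (n + 2) = (S - S⁻¹) * P (n + 1) + P n := by
  have hS := S_ne_zero
  have hT : T = S ^ 2 := rfl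
  unfold P
  rw [show n + 2 + 1 = (n + 1) + 2 by ring, Q_succ, Q_succ, hT]
  simp only [inv_pow]
  field_simp
  ring

open SimpleGraph Walk in
lemma pathGraph_isAcyclic (n : ℕ) : (SimpleGraph.pathGraph n).IsAcyclic := by
  intro v c hc
  have hne : c.support.toFinset.Nonempty := by
    simp [List.toFinset_nonempty_iff, c.support_ne_nil]
  set M := c.support.toFinset.max' hne with hMdef
  have hM : M ∈ c.support := by
    have := c.support.toFinset.max'_mem hne
    simpa using this
  have hmax : ∀ x ∈ c.support, x ≤ M := fun x hx =>
    Finset.le_max' _ _ (by simpa using hx)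
  have hrot : ∀ e : Sym2 (Fin n), e ∈ (c.rotate M hM).edges → e ∈ c.edges := fun e he =>
    (SimpleGraph.Walk.rotate_edges c M hM).mem_iff.mp he
  have hc' : (c.rotate M hM).IsCycle := hc.rotate hM
  cases h : c.rotate M hM with
  | nil =>
      rw [h] at hc'
      exact hc'.ne_nil rfl
  | @cons _ u _ hadj p =>
      rw [h] at hc' hrot
      have hnodup := hc'.edges_nodup
      rw [Walk.edges_cons] at hnodup
      have hhead : s(M, u) ∉ p.edges := (List.nodup_cons.mp hnodup).1
      have hlen : 3 ≤ (Walk.cons hadj p).length := hc'.three_le_length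
      have hpne : ¬ p.reverse.Nil := by
        rw [Walk.nil_iff_length_eq, Walk.length_reverse]
        simp at hlen
        omega
      obtain ⟨x, hadj2, q, hq⟩ := Walk.not_nil_iff.mp hpne
      have hxe : s(M, x) ∈ p.edges := by
        have : s(M, x) ∈ p.reverse.edges := by rw [hq]; simp
        rwa [Walk.edges_reverse, List.mem_reverse] at this
      have hus : u ∈ c.support := by
        have : s(M, u) ∈ (Walk.cons hadj p).edges := by simp
        exact c.snd_mem_support_of_mem_edges (hrot _ this)
      have hxs : x ∈ c.support := by
        have : s(M, x) ∈ (Walk.cons hadj p).edges := by simp [hxe]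
        exact c.snd_mem_support_of_mem_edges (hrot _ this)
      have hu1 : (u : Fin n).val + 1 = M.val := by
        rcases SimpleGraph.pathGraph_adj.mp hadj with h1 | h1
        · exfalso
          have := hmax u hus
          rw [Fin.le_def] at this
          omega
        · exact h1
      have hx1 : (x : Fin n).val + 1 = M.val := by
        rcases SimpleGraph.pathGraph_adj.mp hadj2 with h1 | h1
        · exfalso
          have := hmax x hxs
          rw [Fin.le_def] at this
          omega
        · exact h1
      have huq : u = x := by
        apply Fin.ext
        omega
      exact hhead (by rw [show s(M, u) = s(M, x) from by rw [huq]]; exact hxe)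

lemma path_val (f : GraphFun) (hf : AlexRules f) :
    ∀ (n : ℕ) (V : Type) [Fintype V] [DecidableEq V] (G : SimpleGraph V),
      G ≃g SimpleGraph.pathGraph n → f V G = P n := by
  intro n
  induction n using Nat.strong_induction_on with
  | _ n ih =>
  rcases n with _ | _ | m
  · intro V _ _ G e
    rw [hf.1 V G (Equiv.isEmpty e.toEquiv)]
    simp [P]
  · intro V _ _ G e
    rw [hf.2.1 V G (Fintype.card_congr e.toEquiv)]
    have hS := S_ne_zero
    simp only [P, Finset.sum_range_succ, Finset.sum_range_zero, T]
    field_simp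
    ring_nf
    rw [mul_inv_cancel₀ hS, show S ^ 3 = S ^ 2 * S by ring, mul_inv_cancel_right₀ hS]
  · intro V _ _ G e
    set v := e.symm 0 with hv
    set w := e.symm 1 with hw
    have h1val : ((1 : Fin (m + 2)) : ℕ) = 1 := rfl
    have hev : ∀ x : V, e x = 0 ↔ x = v := fun x =>
      ⟨fun h => by rw [hv, ← h]; exact (e.symm_apply_apply x).symm,
       fun h => by rw [h, hv]; exact e.apply_symm_apply 0⟩
    have hew : ∀ x : V, e x = 1 ↔ x = w := fun x =>
      ⟨fun h => by rw [hw, ← h]; exact (e.symm_apply_apply x).symm,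
       fun h => by rw [h, hw]; exact e.apply_symm_apply 1⟩
    have hadj : ∀ x y : V, G.Adj x y ↔ (SimpleGraph.pathGraph (m + 2)).Adj (e x) (e y) :=
      fun x y => e.map_rel_iff.symm
    have hac : G.IsAcyclic := by
      intro a c hcyc
      exact pathGraph_isAcyclic (m + 2) (c.map e.toHom) (hcyc.map e.injective)
    have hleaf : IsLeaf G v w := by
      ext x
      simp only [SimpleGraph.mem_neighborSet, Set.mem_singleton_iff]
      constructor
      · intro h
        have h2 : (SimpleGraph.pathGraph (m + 2)).Adj (e v) (e x) := (hadj v x).mp h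
        rw [hv, e.apply_symm_apply, SimpleGraph.pathGraph_adj] at h2
        have : e x = 1 := by
          apply Fin.ext
          rw [h1val]
          simp only [Fin.val_zero] at h2
          omega
        exact (hew x).mp this
      · intro h
        subst h
        apply (hadj v w).mpr
        rw [hv, hw, e.apply_symm_apply, e.apply_symm_apply, SimpleGraph.pathGraph_adj]
        left
        rw [h1val]
        simp
    -- bounds
    have hbound1 : ∀ x : V, x ≠ v → 1 ≤ (e x).val ∧ (e x).val < m + 2 := by
      intro x hx
      have h0 : e x ≠ 0 := fun h => hx ((hev x).mp h)
      have := (e x).isLt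
      have : (e x).val ≠ 0 := fun h => h0 (Fin.ext (by simpa using h))
      omega
    have hbound2 : ∀ x : V, x ≠ v → x ≠ w → 2 ≤ (e x).val ∧ (e x).val < m + 2 := by
      intro x hx hxw
      have h1 : e x ≠ 1 := fun h => hxw ((hew x).mp h)
      have hb := hbound1 x hx
      have : (e x).val ≠ 1 := fun h => h1 (Fin.ext (by rw [h1val]; exact h))
      omega
    -- iso for V minus v
    have iso1 : (G.induce {x : V | x ≠ v}) ≃g SimpleGraph.pathGraph (m + 1) := by
      refine ⟨⟨fun x => ⟨(e x.1).val - 1, by have := hbound1 x.1 x.2; omega⟩,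
        fun k => ⟨e.symm ⟨k.val + 1, by omega⟩, ?_⟩, ?_, ?_⟩, ?_⟩
      · intro h
        have : e (e.symm (⟨k.val + 1, by omega⟩ : Fin (m + 2))) = 0 := (hev _).mpr h
        rw [e.apply_symm_apply] at this
        have := congrArg Fin.val this
        simp at this
      · intro x
        apply Subtype.ext
        show e.symm _ = x.1
        have h : (⟨(e x.1).val - 1 + 1, by have := hbound1 x.1 x.2; omega⟩ : Fin (m + 2)) = e x.1 := by
          apply Fin.ext
          have := hbound1 x.1 x.2
          simp
          omega
        rw [h, e.symm_apply_apply]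
      · intro k
        apply Fin.ext
        show (e (e.symm _)).val - 1 = k.val
        rw [e.apply_symm_apply]
        simp
      · intro a b
        simp only [Equiv.coe_fn_mk, SimpleGraph.pathGraph_adj, SimpleGraph.comap_adj,
          Function.Embedding.coe_subtype]
        rw [hadj a.1 b.1, SimpleGraph.pathGraph_adj]
        have ha := hbound1 a.1 a.2
        have hb := hbound1 b.1 b.2
        omega
    -- iso for V minus v and w
    have iso2 : (G.induce {x : V | x ≠ v ∧ x ≠ w}) ≃g SimpleGraph.pathGraph m := by
      refine ⟨⟨fun x => ⟨(e x.1).val - 2, by have := hbound2 x.1 x.2.1 x.2.2; omega⟩,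
        fun k => ⟨e.symm ⟨k.val + 2, by omega⟩, ?_, ?_⟩, ?_, ?_⟩, ?_⟩
      · intro h
        have : e (e.symm (⟨k.val + 2, by omega⟩ : Fin (m + 2))) = 0 := (hev _).mpr h
        rw [e.apply_symm_apply] at this
        have := congrArg Fin.val this
        simp at this
      · intro h
        have : e (e.symm (⟨k.val + 2, by omega⟩ : Fin (m + 2))) = 1 := (hew _).mpr h
        rw [e.apply_symm_apply] at this
        have := congrArg Fin.val this
        rw [h1val] at this
        simp at this
      · intro x
        apply Subtype.ext
        show e.symm _ = x.1
        have h : (⟨(e x.1).val - 2 + 2, by have := hbound2 x.1 x.2.1 x.2.2; omega⟩ : Fin (m + 2)) = e x.1 := by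
          apply Fin.ext
          have := hbound2 x.1 x.2.1 x.2.2
          simp
          omega
        rw [h, e.symm_apply_apply]
      · intro k
        apply Fin.ext
        show (e (e.symm _)).val - 2 = k.val
        rw [e.apply_symm_apply]
        simp
      · intro a b
        simp only [Equiv.coe_fn_mk, SimpleGraph.pathGraph_adj, SimpleGraph.comap_adj,
          Function.Embedding.coe_subtype]
        rw [hadj a.1 b.1, SimpleGraph.pathGraph_adj]
        have ha := hbound2 a.1 a.2.1 a.2.2
        have hb := hbound2 b.1 b.2.1 b.2.2
        omega
    rw [hf.2.2.1 V G hac v w hleaf,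
      ih (m + 1) (by omega) _ (G.induce {x : V | x ≠ v}) iso1,
      ih m (by omega) _ (G.induce {x : V | x ≠ v ∧ x ≠ w}) iso2]
    exact (P_rec m).symm

/-- `Δ(A_n) = t^{−n/2} · Σ_{k=0}^{n} (−1)^{n−k} t^k` for the path on `n` vertices. -/
theorem alexander_path (f : GraphFun) (hf : AlexRules f) (n : ℕ) :
    f (Fin n) (SimpleGraph.pathGraph n) =
      (S⁻¹) ^ n * ∑ k ∈ Finset.range (n + 1), (-1 : K) ^ (n - k) * T ^ k := by
  rw [path_val f hf n (Fin n) (SimpleGraph.pathGraph n) (RelIso.refl _)]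
  rfl
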